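/- Let B be a nondegenerate bilinear form on ℂ^k whose symmetric part Q and skew part Λ satisfy: Λ vanishes identically on a subspace E of dimension 2, Q vanishes identically on a complement F of dimension k−2, and ℂ^k = E ⊕ F (so that B = Q|_E ⊕ Λ|_F block-diagonally, with Q|_E and Λ|_F nondegenerate, k even). Then h_B = so(Q|_E) ⊕ sp(Λ|_F) and dim h_B = 1 + (k−2)(k−1)/2 = binom(k,2) − k + 2. -/
import Mathlib

open Matrix

/-- The linear map `X ↦ XB + BXᵗ`; its kernel is the symmetry Lie algebra `h_B`
of the bilinear form `B`, i.e. the Lie algebra of the stabilizer of `B` under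
`g · B = g B gᵗ`. -/
noncomputable def formActionL (n : Type*) [Fintype n] [DecidableEq n]
    (B : Matrix n n ℂ) : Matrix n n ℂ →ₗ[ℂ] Matrix n n ℂ where
  toFun X := X * B + B * Xᵀ
  map_add' X Y := by
    simp only [Matrix.transpose_add, Matrix.add_mul, Matrix.mul_add]
    abel
  map_smul' t X := by
    simp only [Matrix.transpose_smul, Matrix.smul_mul, Matrix.mul_smul,
      RingHom.id_apply, smul_add]

section Aux

variable {n o : Type*} [Fintype n] [DecidableEq n] [Fintype o] [DecidableEq o]

/-- `Y ↦ Y + Yᵀ`. -/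
def addT (n : Type*) [Fintype n] [DecidableEq n] :
    Matrix n n ℂ →ₗ[ℂ] Matrix n n ℂ where
  toFun Y := Y + Yᵀ
  map_add' X Y := by simp [Matrix.transpose_add]; abel
  map_smul' t X := by simp [Matrix.transpose_smul, smul_add]

/-- `Y ↦ Y - Yᵀ`. -/
def subT (n : Type*) [Fintype n] [DecidableEq n] :
    Matrix n n ℂ →ₗ[ℂ] Matrix n n ℂ where
  toFun Y := Y - Yᵀ
  map_add' X Y := by simp [Matrix.transpose_add]; abel
  map_smul' t X := by simp [Matrix.transpose_smul, smul_sub]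

/-- Right multiplication by an invertible matrix, as a linear equivalence. -/
noncomputable def mulRightE (B : Matrix n n ℂ) (hB : IsUnit B.det) :
    Matrix n n ℂ ≃ₗ[ℂ] Matrix n n ℂ where
  toFun X := X * B
  invFun X := X * B⁻¹
  map_add' X Y := Matrix.add_mul X Y B
  map_smul' t X := Matrix.smul_mul t X B
  left_inv X := by
    show X * B * B⁻¹ = X
    rw [Matrix.mul_assoc, Matrix.mul_nonsing_inv B hB, Matrix.mul_one]
  right_inv X := by
    show X * B⁻¹ * B = X
    rw [Matrix.mul_assoc, Matrix.nonsing_inv_mul B hB, Matrix.mul_one]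

lemma finrank_ker_comp (e : Matrix n n ℂ ≃ₗ[ℂ] Matrix n n ℂ)
    (g : Matrix n n ℂ →ₗ[ℂ] Matrix n n ℂ) :
    Module.finrank ℂ (LinearMap.ker (g ∘ₗ (e : Matrix n n ℂ →ₗ[ℂ] Matrix n n ℂ)))
      = Module.finrank ℂ (LinearMap.ker g) := by
  rw [LinearMap.ker_comp]
  rw [show Submodule.comap (e : Matrix n n ℂ →ₗ[ℂ] Matrix n n ℂ) (LinearMap.ker g)
      = Submodule.map (e.symm : Matrix n n ℂ →ₗ[ℂ] Matrix n n ℂ) (LinearMap.ker g) from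
    (Submodule.map_equiv_eq_comap_symm e.symm _).symm]
  exact LinearEquiv.finrank_map_eq e.symm _

lemma finrank_ker_symmForm (Q : Matrix n n ℂ) (hQsymm : Qᵀ = Q) (hQnd : IsUnit Q.det) :
    Module.finrank ℂ (LinearMap.ker (formActionL n Q))
      = Module.finrank ℂ (LinearMap.ker (addT n)) := by
  have h : formActionL n Q
      = (addT n) ∘ₗ (mulRightE Q hQnd : Matrix n n ℂ →ₗ[ℂ] Matrix n n ℂ) := by
    ext X : 1
    show X * Q + Q * Xᵀ = X * Q + (X * Q)ᵀ
    rw [Matrix.transpose_mul, hQsymm]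
  rw [h, finrank_ker_comp]

lemma finrank_ker_skewForm (L : Matrix n n ℂ) (hLskew : Lᵀ = -L) (hLnd : IsUnit L.det) :
    Module.finrank ℂ (LinearMap.ker (formActionL n L))
      = Module.finrank ℂ (LinearMap.ker (subT n)) := by
  have h : formActionL n L
      = (subT n) ∘ₗ (mulRightE L hLnd : Matrix n n ℂ →ₗ[ℂ] Matrix n n ℂ) := by
    ext X : 1
    show X * L + L * Xᵀ = X * L - (X * L)ᵀ
    rw [Matrix.transpose_mul, hLskew, Matrix.neg_mul, sub_neg_eq_add]
  rw [h, finrank_ker_comp]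

/-- Symmetric `m × m` matrices are parametrized by their entries on or above
the diagonal. -/
noncomputable def symEquiv (m : ℕ) :
    (LinearMap.ker (subT (Fin m))) ≃ₗ[ℂ] ({ p : Fin m × Fin m // p.1 ≤ p.2 } → ℂ) where
  toFun Y p := (Y : Matrix (Fin m) (Fin m) ℂ) p.1.1 p.1.2
  map_add' X Y := rfl
  map_smul' t X := rfl
  invFun g := ⟨Matrix.of fun i j =>
      if h : i ≤ j then g ⟨(i, j), h⟩ else g ⟨(j, i), le_of_not_ge h⟩, by
    rw [LinearMap.mem_ker]
    show _ - _ = (0 : Matrix (Fin m) (Fin m) ℂ)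
    rw [sub_eq_zero]
    ext i j
    simp only [Matrix.transpose_apply, Matrix.of_apply]
    rcases lt_trichotomy i j with h | h | h
    · rw [dif_pos h.le, dif_neg (not_le.mpr h)]
    · subst h; rfl
    · rw [dif_neg (not_le.mpr h), dif_pos h.le]⟩
  left_inv Y := by
    have h := Y.2
    rw [LinearMap.mem_ker] at h
    have h' : (Y : Matrix (Fin m) (Fin m) ℂ) - (Y : Matrix (Fin m) (Fin m) ℂ)ᵀ = 0 := h
    rw [sub_eq_zero] at h'
    apply Subtype.ext
    ext i j
    simp only [Matrix.of_apply]
    by_cases hij : i ≤ j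
    · rw [dif_pos hij]
    · rw [dif_neg hij]
      exact congrFun (congrFun h'.symm i) j
  right_inv g := by
    funext p
    obtain ⟨⟨i, j⟩, h⟩ := p
    simp only [Matrix.of_apply, dif_pos h]

lemma finrank_sym (m : ℕ) :
    Module.finrank ℂ (LinearMap.ker (subT (Fin m))) = m * (m + 1) / 2 := by
  rw [(symEquiv m).finrank_eq, Module.finrank_fintype_fun_eq_card]
  rw [← Fintype.card_congr (Sym2.sortEquiv (α := Fin m)), Sym2.card]
  simp [Nat.choose_two_right, Nat.mul_comm]

/-- Skew-symmetric `2 × 2` matrices are parametrized by the top-right entry. -/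
noncomputable def skew2Equiv : (LinearMap.ker (addT (Fin 2))) ≃ₗ[ℂ] ℂ where
  toFun Y := (Y : Matrix (Fin 2) (Fin 2) ℂ) 0 1
  map_add' _ _ := rfl
  map_smul' _ _ := rfl
  invFun c := ⟨Matrix.of ![![0, c], ![-c, 0]], by
    rw [LinearMap.mem_ker]
    show _ + _ = (0 : Matrix (Fin 2) (Fin 2) ℂ)
    ext i j
    rw [Matrix.add_apply, Matrix.transpose_apply, Matrix.zero_apply]
    fin_cases i <;> fin_cases j <;> simp⟩
  left_inv Y := by
    have h := Y.2
    rw [LinearMap.mem_ker] at h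
    have h' : (Y : Matrix (Fin 2) (Fin 2) ℂ) + (Y : Matrix (Fin 2) (Fin 2) ℂ)ᵀ = 0 := h
    have key : ∀ i j, (Y : Matrix (Fin 2) (Fin 2) ℂ) i j
        + (Y : Matrix (Fin 2) (Fin 2) ℂ) j i = 0 := by
      intro i j
      have := congrFun (congrFun h' i) j
      simpa [Matrix.add_apply, Matrix.transpose_apply] using this
    have h00 : (Y : Matrix (Fin 2) (Fin 2) ℂ) 0 0 = 0 := by linear_combination (key 0 0) / 2
    have h11 : (Y : Matrix (Fin 2) (Fin 2) ℂ) 1 1 = 0 := by linear_combination (key 1 1) / 2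
    have h10 : (Y : Matrix (Fin 2) (Fin 2) ℂ) 1 0
        = -(Y : Matrix (Fin 2) (Fin 2) ℂ) 0 1 := by
      linear_combination key 1 0
    apply Subtype.ext
    ext i j
    fin_cases i <;> fin_cases j <;> simp [h00, h11, h10]
  right_inv c := rfl

lemma finrank_skew2 : Module.finrank ℂ (LinearMap.ker (addT (Fin 2))) = 1 := by
  rw [skew2Equiv.finrank_eq, Module.finrank_self]

lemma mem_ker_block_iff (Q : Matrix n n ℂ) (L : Matrix o o ℂ)
    (hQsymm : Qᵀ = Q) (hQnd : IsUnit Q.det) (hLskew : Lᵀ = -L) (hLnd : IsUnit L.det)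
    (X : Matrix (n ⊕ o) (n ⊕ o) ℂ) :
    X ∈ LinearMap.ker (formActionL (n ⊕ o) (Matrix.fromBlocks Q 0 0 L)) ↔
      ∃ (X₁ : Matrix n n ℂ) (X₂ : Matrix o o ℂ),
        X₁ * Q + Q * X₁ᵀ = 0 ∧ X₂ * L + L * X₂ᵀ = 0 ∧ X = Matrix.fromBlocks X₁ 0 0 X₂ := by
  rw [LinearMap.mem_ker]
  constructor
  · intro h
    have h' : X * fromBlocks Q 0 0 L + fromBlocks Q 0 0 L * Xᵀ = 0 := h
    set A := X.toBlocks₁₁ with hA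
    set B := X.toBlocks₁₂ with hB
    set C := X.toBlocks₂₁ with hC
    set D := X.toBlocks₂₂ with hD
    have hX : X = fromBlocks A B C D := (fromBlocks_toBlocks X).symm
    rw [hX, fromBlocks_transpose, fromBlocks_multiply, fromBlocks_multiply,
      fromBlocks_add] at h'
    rw [show (0 : Matrix (n ⊕ o) (n ⊕ o) ℂ) = fromBlocks 0 0 0 0 from
      (fromBlocks_zero).symm, fromBlocks_inj] at h'
    obtain ⟨h11, h12, h21, h22⟩ := h'
    simp only [Matrix.mul_zero, Matrix.zero_mul, add_zero, zero_add] at h11 h12 h21 h22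
    -- h12 : B * L + Q * Cᵀ = 0, h21 : C * Q + L * Bᵀ = 0
    have h21t : Q * Cᵀ - B * L = 0 := by
      have := congrArg Matrix.transpose h21
      rw [Matrix.transpose_add, Matrix.transpose_mul, Matrix.transpose_mul,
        hQsymm, hLskew, Matrix.mul_neg, Matrix.transpose_zero,
        ← sub_eq_add_neg] at this
      exact this
    have hBL : B * L = 0 := by
      have h2 : (2 : ℂ) • (B * L) = 0 := by
        have e : (2 : ℂ) • (B * L) = (B * L + Q * Cᵀ) - (Q * Cᵀ - B * L) := by module
        rw [e, h12, h21t, sub_zero]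
      exact (smul_eq_zero.mp h2).resolve_left two_ne_zero
    have hB0 : B = 0 := by
      calc B = B * L * L⁻¹ := by
            rw [Matrix.mul_assoc, Matrix.mul_nonsing_inv L hLnd, Matrix.mul_one]
        _ = 0 := by rw [hBL, Matrix.zero_mul]
    have hQC : Q * Cᵀ = 0 := by
      have h12' := h12
      rw [hB0, Matrix.zero_mul, zero_add] at h12'
      exact h12'
    have hC0 : C = 0 := by
      have hCt : Cᵀ = 0 := by
        calc Cᵀ = Q⁻¹ * (Q * Cᵀ) := by
              rw [← Matrix.mul_assoc, Matrix.nonsing_inv_mul Q hQnd, Matrix.one_mul]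
          _ = 0 := by rw [hQC, Matrix.mul_zero]
      calc C = Cᵀᵀ := (Matrix.transpose_transpose C).symm
        _ = 0 := by rw [hCt, Matrix.transpose_zero]
    exact ⟨A, D, h11, h22, by rw [hX, hB0, hC0]⟩
  · rintro ⟨X₁, X₂, h1, h2, rfl⟩
    show fromBlocks X₁ 0 0 X₂ * fromBlocks Q 0 0 L
        + fromBlocks Q 0 0 L * (fromBlocks X₁ 0 0 X₂)ᵀ = 0
    rw [fromBlocks_transpose, fromBlocks_multiply, fromBlocks_multiply, fromBlocks_add]
    simp only [Matrix.mul_zero, Matrix.zero_mul, add_zero, zero_add, Matrix.transpose_zero,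
      h1, h2]
    exact fromBlocks_zero

/-- The product of the block kernels maps linearly into the kernel of the
block-diagonal form action. -/
noncomputable def kerProdMap (Q : Matrix n n ℂ) (L : Matrix o o ℂ)
    (hQsymm : Qᵀ = Q) (hQnd : IsUnit Q.det) (hLskew : Lᵀ = -L) (hLnd : IsUnit L.det) :
    ((LinearMap.ker (formActionL n Q)) × (LinearMap.ker (formActionL o L))) →ₗ[ℂ]
      LinearMap.ker (formActionL (n ⊕ o) (Matrix.fromBlocks Q 0 0 L)) where
  toFun p := ⟨fromBlocks p.1.1 0 0 p.2.1, by
    rw [mem_ker_block_iff Q L hQsymm hQnd hLskew hLnd]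
    exact ⟨p.1.1, p.2.1, LinearMap.mem_ker.mp p.1.2, LinearMap.mem_ker.mp p.2.2, rfl⟩⟩
  map_add' p q := by
    apply Subtype.ext
    show fromBlocks (p.1.1 + q.1.1) 0 0 (p.2.1 + q.2.1)
        = fromBlocks p.1.1 0 0 p.2.1 + fromBlocks q.1.1 0 0 q.2.1
    rw [fromBlocks_add]
    simp
  map_smul' t p := by
    apply Subtype.ext
    show fromBlocks (t • p.1.1) 0 0 (t • p.2.1) = t • fromBlocks p.1.1 0 0 p.2.1
    rw [fromBlocks_smul]
    simp

lemma kerProdMap_bijective (Q : Matrix n n ℂ) (L : Matrix o o ℂ)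
    (hQsymm : Qᵀ = Q) (hQnd : IsUnit Q.det) (hLskew : Lᵀ = -L) (hLnd : IsUnit L.det) :
    Function.Bijective (kerProdMap Q L hQsymm hQnd hLskew hLnd) := by
  constructor
  · intro p q hpq
    have h : fromBlocks p.1.1 0 0 p.2.1 = fromBlocks q.1.1 0 0 q.2.1 :=
      congrArg Subtype.val hpq
    rw [fromBlocks_inj] at h
    exact Prod.ext (Subtype.ext h.1) (Subtype.ext h.2.2.2)
  · rintro ⟨X, hX⟩
    obtain ⟨X₁, X₂, h1, h2, rfl⟩ :=
      (mem_ker_block_iff Q L hQsymm hQnd hLskew hLnd X).mp hX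
    exact ⟨(⟨X₁, LinearMap.mem_ker.mpr h1⟩, ⟨X₂, LinearMap.mem_ker.mpr h2⟩), rfl⟩

end Aux

/-- Case B3: for `B = Q|_E ⊕ Λ|_F` block-diagonal on `ℂ^k = E ⊕ F` with
`dim E = 2`, `Q|_E` symmetric nondegenerate and `Λ|_F` skew-symmetric
nondegenerate (`k` even), one has `h_B = so(Q|_E) ⊕ sp(Λ|_F)` and
`dim h_B = 1 + (k−2)(k−1)/2 = binom(k,2) − k + 2`. -/
theorem dim_hB_caseB3 (k : ℕ) (hk : 2 ≤ k) (heven : Even k)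
    (Q : Matrix (Fin 2) (Fin 2) ℂ) (L : Matrix (Fin (k - 2)) (Fin (k - 2)) ℂ)
    (hQsymm : Qᵀ = Q) (hQnd : IsUnit Q.det)
    (hLskew : Lᵀ = -L) (hLnd : IsUnit L.det) :
    (∀ X : Matrix (Fin 2 ⊕ Fin (k - 2)) (Fin 2 ⊕ Fin (k - 2)) ℂ,
      X ∈ LinearMap.ker (formActionL (Fin 2 ⊕ Fin (k - 2)) (Matrix.fromBlocks Q 0 0 L)) ↔
        ∃ (X₁ : Matrix (Fin 2) (Fin 2) ℂ) (X₂ : Matrix (Fin (k - 2)) (Fin (k - 2)) ℂ),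
          X₁ * Q + Q * X₁ᵀ = 0 ∧ X₂ * L + L * X₂ᵀ = 0 ∧
          X = Matrix.fromBlocks X₁ 0 0 X₂) ∧
    Module.finrank ℂ (LinearMap.ker
        (formActionL (Fin 2 ⊕ Fin (k - 2)) (Matrix.fromBlocks Q 0 0 L)))
      = 1 + (k - 2) * (k - 1) / 2 ∧
    ((1 + (k - 2) * (k - 1) / 2 : ℕ) : ℤ) = (Nat.choose k 2 : ℤ) - k + 2 := by
  obtain ⟨m, rfl⟩ : ∃ m, k = m + 2 := ⟨k - 2, by omega⟩
  have hm : m + 2 - 2 = m := by omega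
  refine ⟨mem_ker_block_iff Q L hQsymm hQnd hLskew hLnd, ?_, ?_⟩
  · -- dimension count
    have e := LinearEquiv.ofBijective _ (kerProdMap_bijective Q L hQsymm hQnd hLskew hLnd)
    rw [← e.finrank_eq, Module.finrank_prod,
      finrank_ker_symmForm Q hQsymm hQnd, finrank_ker_skewForm L hLskew hLnd,
      finrank_skew2, finrank_sym]
    have h1 : m + 2 - 2 = m := by omega
    have h2 : m + 2 - 1 = m + 1 := by omega
    rw [h1, h2]
  · -- arithmetic identity
    have h1 : m + 2 - 2 = m := by omega
    have h2 : m + 2 - 1 = m + 1 := by omega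
    rw [h1, h2]
    have hchoose : (m + 2).choose 2 = (m + 2) * (m + 1) / 2 := by
      rw [Nat.choose_two_right, show m + 2 - 1 = m + 1 from rfl]
    have hev1 : 2 ∣ m * (m + 1) := Nat.even_mul_succ_self m |>.two_dvd
    have hev2 : 2 ∣ (m + 2) * (m + 1) := by
      rcases Nat.even_or_odd m with h | h
      · obtain ⟨t, ht⟩ := h
        exact Dvd.dvd.mul_right (by omega) _
      · have : 2 ∣ (m + 1) := by
          obtain ⟨t, ht⟩ := h; omega
        exact Dvd.dvd.mul_left this _
    obtain ⟨a, ha⟩ := hev1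
    obtain ⟨b, hb⟩ := hev2
    have hda : m * (m + 1) / 2 = a := by rw [ha]; omega
    have hdb : (m + 2) * (m + 1) / 2 = b := by rw [hb]; omega
    have key : (m + 2) * (m + 1) = m * (m + 1) + 2 * (m + 1) := by ring
    rw [ha, hb] at key
    have hab : b = a + m + 1 := by omega
    rw [hchoose, hda, hdb, hab]
    push_cast
    ring
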